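/- A sequence (a_n) of non-negative integers is realizable (i.e., there exists a set X and a map T : X → X with a_n = #{x ∈ X : T^n x = x} for all n ≥ 1, with all these fixed-point counts finite) if and only if for all n ≥ 1, both n divides ∑_{d|n} μ(n/d) a_d and ∑_{d|n} μ(n/d) a_d ≥ 0, where μ is the Möbius function. -/

import Mathlib

/-- A sequence `a : ℕ → ℕ` (indexed from 1) is realizable if there is a set `X`
and a map `T : X → X` such that for every `n ≥ 1` the set of points fixed by the
`n`-th iterate of `T` is finite with cardinality `a n`. -/
def IsRealizable (a : ℕ → ℕ) : Prop :=
  ∃ (X : Type) (T : X → X), ∀ n : ℕ, 1 ≤ n →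
    {x : X | T^[n] x = x}.Finite ∧ {x : X | T^[n] x = x}.ncard = a n

/-- The Möbius-transformed sum `∑_{d ∣ n} μ(n/d) a_d`. -/
def doldSum (a : ℕ → ℕ) (n : ℕ) : ℤ :=
  ∑ d ∈ n.divisors, (ArithmeticFunction.moebius (n / d) : ℤ) * (a d : ℤ)

open Finset Function

/-! ### Möbius inversion bridge -/

lemma dold_bridge (a b : ℕ → ℕ) (h : ∀ n, 0 < n → ∑ d ∈ n.divisors, (b d : ℤ) = (a n : ℤ)) :
    ∀ n, 0 < n → doldSum a n = b n := by
  intro n hn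
  have := (ArithmeticFunction.sum_eq_iff_sum_smul_moebius_eq (R := ℤ)
    (f := fun d => (b d : ℤ)) (g := fun n => (a n : ℤ))).mp h n hn
  rw [doldSum, ← this,
    Nat.sum_divisorsAntidiagonal' (f := fun x y => (ArithmeticFunction.moebius x : ℤ) • ((a y : ℤ)))]
  simp [mul_comm]

lemma dold_bridge' (a b : ℕ → ℕ) (h : ∀ n, 0 < n → doldSum a n = b n) :
    ∀ n, 0 < n → ∑ d ∈ n.divisors, (b d : ℤ) = (a n : ℤ) := by
  apply (ArithmeticFunction.sum_eq_iff_sum_smul_moebius_eq (R := ℤ)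
    (f := fun d => (b d : ℤ)) (g := fun n => (a n : ℤ))).mpr
  intro n hn
  rw [← h n hn, doldSum,
    Nat.sum_divisorsAntidiagonal' (f := fun x y => (ArithmeticFunction.moebius x : ℤ) • ((a y : ℤ)))]
  simp [mul_comm]

/-! ### The construction for the backward direction -/

section Construct
variable (c : ℕ → ℕ)

abbrev Xc := Σ n : ℕ, Fin (c (n+1)) × ZMod (n+1)

def Tc : Xc c → Xc c := fun p => ⟨p.1, p.2.1, p.2.2 + 1⟩

lemma Tc_iterate (m : ℕ) (p : Xc c) : (Tc c)^[m] p = ⟨p.1, p.2.1, p.2.2 + m⟩ := by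
  induction m with
  | zero => simp [Tc]
  | succ k ih =>
      rw [Function.iterate_succ_apply', ih, Tc]
      simp only [Sigma.mk.inj_iff, heq_eq_eq, Prod.mk.injEq, true_and]
      push_cast
      ring

lemma fixed_eq (m : ℕ) : {x : Xc c | (Tc c)^[m] x = x} = {p : Xc c | (p.1 + 1) ∣ m} := by
  ext ⟨n, i, x⟩
  simp only [Set.mem_setOf_eq, Tc_iterate]
  constructor
  · intro h
    simp only [Sigma.mk.inj_iff, heq_eq_eq, Prod.mk.injEq, true_and] at h
    have : (m : ZMod (n+1)) = 0 := by
      have h3 : x + (m : ZMod (n+1)) = x + 0 := by rw [h, add_zero]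
      exact add_left_cancel h3
    exact (ZMod.natCast_eq_zero_iff m (n+1)).mp this
  · intro h
    have : (m : ZMod (n+1)) = 0 := (ZMod.natCast_eq_zero_iff m (n+1)).mpr h
    simp [this]

/-- subtype of a sigma type by a predicate on the base -/
def sigmaSub {β : ℕ → Type} (q : ℕ → Prop) :
    {p : Σ n, β n // q p.1} ≃ Σ n : {n // q n}, β n where
  toFun p := ⟨⟨p.1.1, p.2⟩, p.1.2⟩
  invFun p := ⟨⟨p.1.1, p.2⟩, p.1.2⟩
  left_inv _ := rfl
  right_inv _ := rfl

def baseEquiv (m : ℕ) (hm : 0 < m) : {n : ℕ // (n + 1) ∣ m} ≃ {d : ℕ // d ∈ m.divisors} where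
  toFun n := ⟨n.1 + 1, Nat.mem_divisors.mpr ⟨n.2, hm.ne'⟩⟩
  invFun d := ⟨d.1 - 1, by
    have h1 : 1 ≤ d.1 := Nat.pos_of_mem_divisors d.2
    rw [Nat.sub_add_cancel h1]
    exact (Nat.mem_divisors.mp d.2).1⟩
  left_inv n := by simp
  right_inv d := by
    have h1 : 1 ≤ d.1 := Nat.pos_of_mem_divisors d.2
    ext
    simp [Nat.sub_add_cancel h1]

noncomputable def fixedEquiv (m : ℕ) (hm : 0 < m) :
    {x : Xc c | (Tc c)^[m] x = x} ≃
      Σ d : {d : ℕ // d ∈ m.divisors}, Fin (c (d.1 - 1 + 1)) × ZMod (d.1 - 1 + 1) := by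
  refine (Equiv.setCongr (fixed_eq c m)).trans ?_
  refine (sigmaSub (β := fun n => Fin (c (n+1)) × ZMod (n+1)) (fun n => (n + 1) ∣ m)).trans ?_
  exact Equiv.sigmaCongr (baseEquiv m hm) (fun n => by
    simp only [baseEquiv]
    exact Equiv.cast (by simp))

lemma fixed_card (m : ℕ) (hm : 0 < m) :
    {x : Xc c | (Tc c)^[m] x = x}.Finite ∧
    {x : Xc c | (Tc c)^[m] x = x}.ncard = ∑ d ∈ m.divisors, c d * d := by
  have e := fixedEquiv c m hm
  haveI : Fintype {x : Xc c | (Tc c)^[m] x = x} := Fintype.ofEquiv _ e.symm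
  constructor
  · exact Set.toFinite _
  · rw [← Nat.card_coe_set_eq, Nat.card_congr e, Nat.card_eq_fintype_card,
      Fintype.card_sigma, ← Finset.sum_coe_sort m.divisors (fun d => c d * d)]
    apply Fintype.sum_congr
    intro d
    have h1 : 1 ≤ d.1 := Nat.pos_of_mem_divisors d.2
    rw [Fintype.card_prod, Fintype.card_fin, ZMod.card, Nat.sub_add_cancel h1]

end Construct

/-! ### The forward direction: orbit counting -/

section Forward
variable {X : Type} [DecidableEq X] (T : X → X)

/-- orbit finset -/
noncomputable def orb (d : ℕ) (x : X) : Finset X := (Finset.range d).image (fun k => T^[k] x)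

variable {T}

omit [DecidableEq X] in
lemma mem_pp {d : ℕ} (hd : 0 < d) {x : X} (hx : minimalPeriod T x = d) : x ∈ periodicPts T :=
  mk_mem_periodicPts (by omega) (hx ▸ isPeriodicPt_minimalPeriod T x)

lemma orb_coe {d : ℕ} (hd : 0 < d) {x : X} (hx : minimalPeriod T x = d) :
    (orb T d x : Set X) = Set.range (fun k => T^[k] x) := by
  ext y
  simp only [orb, coe_image, coe_range, Set.mem_image, Set.mem_Iio, Set.mem_range]
  constructor
  · rintro ⟨k, _, rfl⟩; exact ⟨k, rfl⟩
  · rintro ⟨k, rfl⟩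
    refine ⟨k % d, Nat.mod_lt _ hd, ?_⟩
    rw [← hx]
    exact iterate_mod_minimalPeriod_eq

lemma orb_card {d : ℕ} {x : X} (hx : minimalPeriod T x = d) : (orb T d x).card = d := by
  rw [orb, Finset.card_image_of_injOn, Finset.card_range]
  rw [Finset.coe_range]
  exact hx ▸ iterate_injOn_Iio_minimalPeriod

omit [DecidableEq X] in
lemma iter_mem_E {d : ℕ} (hd : 0 < d) {x : X} (hx : minimalPeriod T x = d) (k : ℕ) :
    minimalPeriod T (T^[k] x) = d := by
  rw [minimalPeriod_apply_iterate (mem_pp hd hx), hx]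

lemma orb_eq {d : ℕ} (hd : 0 < d) {x y : X} (hx : minimalPeriod T x = d)
    (hy : y ∈ orb T d x) : orb T d y = orb T d x := by
  have hyE : minimalPeriod T y = d := by
    have := hy
    simp only [orb, Finset.mem_image, Finset.mem_range] at this
    obtain ⟨k, _, rfl⟩ := this
    exact iter_mem_E hd hx k
  apply Finset.coe_injective
  rw [orb_coe hd hx, orb_coe hd hyE]
  simp only [orb, Finset.mem_image, Finset.mem_range] at hy
  obtain ⟨k, hk, rfl⟩ := hy
  apply Set.eq_of_subset_of_subset
  · rintro z ⟨j, rfl⟩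
    exact ⟨j + k, by simp only []; rw [Function.iterate_add_apply]⟩
  · rintro z ⟨j, rfl⟩
    have hxper : IsPeriodicPt T d x := hx ▸ isPeriodicPt_minimalPeriod T x
    refine ⟨j + (d - k), ?_⟩
    simp only
    rw [Function.iterate_add_apply, ← Function.iterate_add_apply T (d-k) k x]
    rw [Nat.sub_add_cancel hk.le, hxper]

lemma dvd_E_card {d : ℕ} (hd : 0 < d) (hfin : {x : X | minimalPeriod T x = d}.Finite) :
    d ∣ {x : X | minimalPeriod T x = d}.ncard := by
  classical
  set s := hfin.toFinset with hs
  have hmem : ∀ x ∈ s, minimalPeriod T x = d := fun x hx => by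
    simpa [hs] using hx
  have hcover : ∀ x ∈ s, orb T d x ∈ s.image (orb T d) := fun x hx =>
    Finset.mem_image_of_mem _ hx
  have hcard := Finset.card_eq_sum_card_fiberwise hcover
  have hfib : ∀ b ∈ s.image (orb T d), (s.filter (fun y => orb T d y = b)).card = d := by
    intro b hb
    obtain ⟨x₀, hx₀, rfl⟩ := Finset.mem_image.mp hb
    have hx₀E := hmem x₀ hx₀
    have : s.filter (fun y => orb T d y = orb T d x₀) = orb T d x₀ := by
      ext y
      simp only [Finset.mem_filter]
      constructor
      · rintro ⟨hys, horb⟩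
        rw [← horb]
        simp only [orb, Finset.mem_image, Finset.mem_range]
        exact ⟨0, hd, rfl⟩
      · intro hy
        have hyE : minimalPeriod T y = d := by
          have := hy
          simp only [orb, Finset.mem_image, Finset.mem_range] at this
          obtain ⟨k, _, rfl⟩ := this
          exact iter_mem_E hd hx₀E k
        refine ⟨by simp [hs, hyE], orb_eq hd hx₀E hy⟩
    rw [this, orb_card hx₀E]
  have hfinal : s.card = (s.image (orb T d)).card * d := by
    rw [hcard, Finset.sum_congr rfl hfib, Finset.sum_const, smul_eq_mul]
  rw [Set.ncard_eq_toFinset_card _ hfin, ← hs, hfinal]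
  exact Dvd.intro_left _ rfl

end Forward

theorem realizable_iff_dold_and_sign (a : ℕ → ℕ) :
    IsRealizable a ↔ ∀ n : ℕ, 1 ≤ n → (n : ℤ) ∣ doldSum a n ∧ 0 ≤ doldSum a n := by
  constructor
  · rintro ⟨X, T, hT⟩
    classical
    -- E d : points of minimal period exactly d
    set E : ℕ → Set X := fun d => {x : X | minimalPeriod T x = d} with hE
    -- for d ≥ 1, E d ⊆ Fix d, hence finite
    have hEsub : ∀ d, 0 < d → E d ⊆ {x : X | T^[d] x = x} := by
      intro d hd x hx
      exact hx ▸ isPeriodicPt_minimalPeriod T x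
    have hEfin : ∀ d, 0 < d → (E d).Finite := fun d hd =>
      Set.Finite.subset (hT d hd).1 (hEsub d hd)
    set b : ℕ → ℕ := fun d => (E d).ncard with hb
    -- partition of Fix n into E d for d ∣ n
    have hpart : ∀ n, 0 < n → ∑ d ∈ n.divisors, (b d : ℤ) = (a n : ℤ) := by
      intro n hn
      obtain ⟨hfin, hcardn⟩ := hT n hn
      have key : (hfin.toFinset).card = ∑ d ∈ n.divisors, b d := by
        have hmemdvd : ∀ x ∈ hfin.toFinset, minimalPeriod T x ∈ n.divisors := by
          intro x hx
          have hfix : IsPeriodicPt T n x := by have h' := hx; simp at h'; exact h'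
          exact Nat.mem_divisors.mpr ⟨hfix.minimalPeriod_dvd, hn.ne'⟩
        rw [Finset.card_eq_sum_card_fiberwise hmemdvd]
        apply Finset.sum_congr rfl
        intro d hd
        obtain ⟨hdvd, hne⟩ := Nat.mem_divisors.mp hd
        have hdpos : 0 < d := Nat.pos_of_mem_divisors hd
        have : hfin.toFinset.filter (fun x => minimalPeriod T x = d) =
            (hEfin d hdpos).toFinset := by
          ext x
          simp only [Finset.mem_filter, Set.Finite.mem_toFinset, Set.mem_setOf_eq, hE]
          constructor
          · rintro ⟨_, h2⟩; exact h2
          · intro h2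
            refine ⟨?_, h2⟩
            have : IsPeriodicPt T d x := h2 ▸ isPeriodicPt_minimalPeriod T x
            exact this.trans_dvd hdvd
        rw [this, hb, ← Set.ncard_eq_toFinset_card (E d) (hEfin d hdpos)]
      have : (a n : ℤ) = ((hfin.toFinset).card : ℤ) := by
        rw [← hcardn, Set.ncard_eq_toFinset_card _ hfin]
      rw [this, key]
      push_cast
      rfl
    intro n hn
    have hdold := dold_bridge a b hpart n hn
    constructor
    · rw [hdold]
      have := dvd_E_card (T := T) hn (hEfin n hn)
      exact_mod_cast Int.natCast_dvd_natCast.mpr this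
    · rw [hdold]; positivity
  · intro h
    -- define orbit counts
    set c : ℕ → ℕ := fun n => ((doldSum a n) / n).toNat with hc
    have hcn : ∀ n : ℕ, 0 < n → (n : ℤ) * (c n : ℤ) = doldSum a n := by
      intro n hn
      obtain ⟨hdvd, hpos⟩ := h n hn
      obtain ⟨k, hk⟩ := hdvd
      have hk0 : 0 ≤ k := by
        by_contra hneg
        push_neg at hneg
        have : doldSum a n < 0 := by
          rw [hk]
          exact mul_neg_of_pos_of_neg (by exact_mod_cast hn) hneg
        omega
      have : c n = k.toNat := by
        rw [hc]
        simp only [hk]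
        rw [Int.mul_ediv_cancel_left _ (by exact_mod_cast hn.ne')]
      rw [this, hk, Int.toNat_of_nonneg hk0]
    have hsum : ∀ n, 0 < n → ∑ d ∈ n.divisors, ((fun d => c d * d) d : ℤ) = (a n : ℤ) := by
      apply dold_bridge'
      intro n hn
      rw [← hcn n hn]
      push_cast
      ring
    refine ⟨Xc c, Tc c, ?_⟩
    intro n hn
    obtain ⟨hfin, hcard⟩ := fixed_card c n hn
    refine ⟨hfin, ?_⟩
    rw [hcard]
    have := hsum n hn
    have : ((∑ d ∈ n.divisors, c d * d : ℕ) : ℤ) = (a n : ℤ) := by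
      push_cast
      push_cast at this
      linarith [this]
    exact_mod_cast this
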